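/- The squared overlap between the honest state ψ₁ and Alice's cheating state ψ̃₁ equals 3/4: |⟨ψ₁, ψ̃₁⟩|² = 3/4. Consequently, if Alice sends ψ̃₁ instead of ψ₁, Bob's projective measurement onto ψ₁ accepts with probability exactly 3/4. -/

import Mathlib

noncomputable section

/-- The standard orthonormal basis vector `e_{(i,j)}` of `ℂ³ ⊗ ℂ³`,
modelled as `EuclideanSpace ℂ (Fin 3 × Fin 3)`. -/
def e (p : Fin 3 × Fin 3) : EuclideanSpace ℂ (Fin 3 × Fin 3) :=
  EuclideanSpace.single p 1

/-- The honest state `ψ₁ = (1/√2)(e_{(1,1)} + e_{(0,2)})`. -/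
def ψ₁ : EuclideanSpace ℂ (Fin 3 × Fin 3) :=
  (1 / (Real.sqrt 2 : ℂ)) • (e (1, 1) + e (0, 2))

/-- Alice's cheating state `ψ̃₁ = (1/√6)(e_{(1,0)} + e_{(1,1)} + 2 e_{(0,2)})`. -/
def ψt₁ : EuclideanSpace ℂ (Fin 3 × Fin 3) :=
  (1 / (Real.sqrt 6 : ℂ)) • (e (1, 0) + e (1, 1) + (2 : ℂ) • e (0, 2))

/-- The squared overlap between the honest state `ψ₁` and Alice's cheating state `ψ̃₁`
is `3/4`; this is the probability that Bob's projective measurement onto `ψ₁` accepts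
when Alice sent `ψ̃₁` instead of `ψ₁`. -/
theorem overlap_psi1_psit1 : ‖(inner ℂ ψ₁ ψt₁ : ℂ)‖ ^ 2 = 3 / 4 := by
  have h : (inner ℂ ψ₁ ψt₁ : ℂ) = 3 / ((Real.sqrt 2 : ℂ) * (Real.sqrt 6 : ℂ)) := by
    simp only [ψ₁, ψt₁, e, inner_smul_left, inner_smul_right, inner_add_left,
      inner_add_right, EuclideanSpace.inner_single_left, EuclideanSpace.inner_single_right,
      EuclideanSpace.single_apply]
    norm_num [Prod.ext_iff, Complex.conj_ofReal]
    ring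
  rw [h]
  rw [norm_div]
  simp [Complex.norm_real, abs_of_nonneg, Real.sqrt_nonneg]
  rw [div_pow, ← Real.sqrt_mul (by norm_num)]
  rw [Real.sq_sqrt (by norm_num)]
  norm_num
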